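/- Let p be an odd prime. There exists an element λ in ℤ_p[ζ_p] such that ℤ_p[ζ_p] = ℤ_p[λ], λ^(p-1) = -p, and λ ≡ 1 - ζ_p modulo (1 - ζ_p)^2. -/

import Mathlib

open scoped Padic

open Polynomial

section Aux

variable (p : ℕ) [hp : Fact p.Prime]

/-- The polynomial `Φ_p(X+1)` over `ℤ_p` is Eisenstein at `(p)`. -/
lemma padic_cyclo_comp_eisenstein :
    ((cyclotomic p ℤ_[p]).comp (X + 1)).IsEisensteinAt (Ideal.span {(p : ℤ_[p])}) := by
  have hprime : Prime ((p : ℕ) : ℤ_[p]) := PadicInt.prime_p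
  have hsp : (Ideal.span {(p : ℤ_[p])}).IsPrime :=
    (Ideal.span_singleton_prime hprime.ne_zero).2 hprime
  have hmap : ((cyclotomic p ℤ).comp (X + 1)).map (Int.castRingHom ℤ_[p]) =
      (cyclotomic p ℤ_[p]).comp (X + 1) := by
    rw [Polynomial.map_comp, map_cyclotomic_int]
    simp
  have hmonicZ : ((cyclotomic p ℤ).comp (X + 1)).Monic := by
    rw [show (X + 1 : ℤ[X]) = X + C 1 by simp]
    refine (cyclotomic.monic p ℤ).comp (monic_X_add_C 1) fun h => ?_
    rw [natDegree_X_add_C] at h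
    exact zero_ne_one h.symm
  have hmonic : ((cyclotomic p ℤ_[p]).comp (X + 1)).Monic := by
    rw [← hmap]; exact hmonicZ.map _
  have hdeg : ((cyclotomic p ℤ_[p]).comp (X + 1)).natDegree =
      ((cyclotomic p ℤ).comp (X + 1)).natDegree := by
    rw [← hmap]
    exact (natDegree_map_eq_of_injective (Int.cast_injective (α := ℤ_[p])) _)
  have hEZ := cyclotomic_comp_X_add_one_isEisensteinAt p
  refine hmonic.isEisensteinAt_of_mem_of_notMem hsp.ne_top (fun {i} hi => ?_) ?_
  · have : ((cyclotomic p ℤ_[p]).comp (X + 1)).coeff i =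
        (((cyclotomic p ℤ).comp (X + 1)).coeff i : ℤ_[p]) := by
      rw [← hmap, coeff_map]; rfl
    rw [this]
    have hiZ : i < ((cyclotomic p ℤ).comp (X + 1)).natDegree := by rwa [← hdeg]
    have hmem : ((cyclotomic p ℤ).comp (X + 1)).coeff i ∈ Ideal.span ({((p : ℕ) : ℤ)} : Set ℤ) :=
      hEZ.mem hiZ
    rw [Ideal.mem_span_singleton] at hmem ⊢
    obtain ⟨c, hc⟩ := hmem
    exact ⟨(c : ℤ_[p]), by rw [hc]; push_cast; ring⟩
  · have hc0 : ((cyclotomic p ℤ_[p]).comp (X + 1)).coeff 0 = (p : ℤ_[p]) := by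
      rw [coeff_zero_eq_eval_zero]
      simp [eval_comp, eval_one_cyclotomic_prime]
    rw [hc0, Ideal.span_singleton_pow, Ideal.mem_span_singleton]
    intro hdvd
    obtain ⟨c, hc⟩ := hdvd
    have h1 : (1 : ℤ_[p]) = (p : ℤ_[p]) * c :=
      mul_left_cancel₀ hprime.ne_zero (by linear_combination hc)
    exact hprime.not_unit (IsUnit.of_mul_eq_one _ h1.symm)

/-- `Φ_p(X+1)` over `ℤ_p` is irreducible. -/
lemma padic_cyclo_comp_irreducible :
    Irreducible ((cyclotomic p ℤ_[p]).comp (X + 1)) := by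
  have hprime : Prime ((p : ℕ) : ℤ_[p]) := PadicInt.prime_p
  have hsp : (Ideal.span {(p : ℤ_[p])}).IsPrime :=
    (Ideal.span_singleton_prime hprime.ne_zero).2 hprime
  have hE := padic_cyclo_comp_eisenstein p
  have hmonic : ((cyclotomic p ℤ_[p]).comp (X + 1)).Monic := by
    rw [show (X + 1 : ℤ_[p][X]) = X + C 1 by simp]
    refine (cyclotomic.monic p ℤ_[p]).comp (monic_X_add_C 1) fun h => ?_
    rw [natDegree_X_add_C] at h
    exact zero_ne_one h.symm
  refine hE.irreducible hsp hmonic.isPrimitive ?_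
  have h2 := hp.out.two_le
  rw [show (X + 1 : ℤ_[p][X]) = X + C 1 by simp, natDegree_comp, natDegree_cyclotomic,
    Nat.totient_prime hp.out, natDegree_X_add_C, mul_one]
  omega

end Aux

lemma ideal_smul_top_eq {R : Type*} [CommRing R] (J : Ideal R) :
    J • (⊤ : Submodule R R) = J := by
  rw [← Ideal.one_eq_top, smul_eq_mul, mul_one]

lemma padic_basis_span_mem (p : ℕ) [hp : Fact p.Prime] {A : Type*} [CommRing A]
    [Algebra ℤ_[p] A] (B : PowerBasis ℤ_[p] A) (c : ℤ_[p]) (x : A) :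
    x ∈ Ideal.span {algebraMap ℤ_[p] A c} ↔ ∀ i, c ∣ B.basis.repr x i := by
  constructor
  · intro hx
    rw [Ideal.mem_span_singleton] at hx
    obtain ⟨y, hy⟩ := hx
    intro i
    have hxy : x = c • y := by rw [hy, Algebra.smul_def]
    rw [hxy, map_smul]
    exact ⟨B.basis.repr y i, by simp⟩
  · intro h
    choose g hg using h
    rw [Ideal.mem_span_singleton]
    refine ⟨∑ i, g i • B.basis i, ?_⟩
    calc x = ∑ i, B.basis.repr x i • B.basis i := (B.basis.sum_repr x).symm
      _ = ∑ i, (c * g i) • B.basis i := by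
          refine Finset.sum_congr rfl fun i _ => ?_
          rw [← hg i]
      _ = algebraMap ℤ_[p] A c * ∑ i, g i • B.basis i := by
          rw [Finset.mul_sum]
          refine Finset.sum_congr rfl fun i _ => ?_
          rw [mul_smul, Algebra.smul_def]

/-- Generic adic-completeness lemma: if `A` has a power basis over `ℤ_p` and `e : A`
satisfies `e ^ k ∈ (p)` and `p ∈ (e)` then `A` is `(e)`-adically complete. -/
lemma padic_span_adic_complete (p : ℕ) [hp : Fact p.Prime] {A : Type*} [CommRing A]
    [Algebra ℤ_[p] A] (B : PowerBasis ℤ_[p] A) (e : A) (k : ℕ) (hk : k ≠ 0)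
    (h1 : e ^ k ∈ Ideal.span {(p : A)}) (h2 : (p : A) ∈ Ideal.span {e}) :
    IsAdicComplete (Ideal.span {e}) A := by
  have hAp : (p : A) = algebraMap ℤ_[p] A (p : ℤ_[p]) := by rw [map_natCast]
  have hApn : ∀ n : ℕ, (p : A) ^ n = algebraMap ℤ_[p] A ((p : ℤ_[p]) ^ n) := by
    intro n; rw [map_pow, hAp]
  obtain ⟨t, ht⟩ := Ideal.mem_span_singleton.mp h1
  obtain ⟨s, hs⟩ := Ideal.mem_span_singleton.mp h2
  have pk : ∀ n : ℕ, ∀ x : A, x ∈ Ideal.span {e} ^ (k * n) → x ∈ Ideal.span {(p : A)} ^ n := by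
    intro n x hx
    rw [Ideal.span_singleton_pow, Ideal.mem_span_singleton] at hx ⊢
    refine dvd_trans ⟨t ^ n, ?_⟩ hx
    rw [pow_mul, ht, mul_pow]
  have pe : ∀ n : ℕ, ∀ x : A, x ∈ Ideal.span {(p : A)} ^ n → x ∈ Ideal.span {e} ^ n := by
    intro n x hx
    rw [Ideal.span_singleton_pow, Ideal.mem_span_singleton] at hx ⊢
    refine dvd_trans ⟨s ^ n, ?_⟩ hx
    rw [hs, mul_pow]
  have hzp : ∀ n : ℕ, ((IsLocalRing.maximalIdeal ℤ_[p]) ^ n • ⊤ : Submodule ℤ_[p] ℤ_[p]) =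
      Ideal.span {(p : ℤ_[p]) ^ n} := by
    intro n
    rw [ideal_smul_top_eq, PadicInt.maximalIdeal_eq_span_p, Ideal.span_singleton_pow]
  have hmem : ∀ (n : ℕ) (x : A), x ∈ Ideal.span {(p : A)} ^ n ↔
      ∀ i, (p : ℤ_[p]) ^ n ∣ B.basis.repr x i := by
    intro n x
    rw [Ideal.span_singleton_pow, hApn n]
    exact padic_basis_span_mem p B _ x
  refine { toIsHausdorff := ?_, toIsPrecomplete := ?_ }
  · -- IsHausdorff
    constructor
    intro x hx
    have hcoord : ∀ i, B.basis.repr x i = 0 := by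
      intro i
      refine IsHausdorff.haus (inferInstance :
        IsHausdorff (IsLocalRing.maximalIdeal ℤ_[p]) ℤ_[p]) _ fun n => ?_
      rw [SModEq.sub_mem, sub_zero, hzp n, Ideal.mem_span_singleton]
      have hx' : x ∈ Ideal.span {e} ^ (k * n) := by
        have := hx (k * n)
        rwa [SModEq.sub_mem, sub_zero, ideal_smul_top_eq] at this
      exact (hmem n x).mp (pk n x hx') i
    have hr : B.basis.repr x = 0 := Finsupp.ext fun i => hcoord i
    exact B.basis.repr.map_eq_zero_iff.mp hr
  · -- IsPrecomplete
    constructor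
    intro f hf
    have key : ∀ i : Fin B.dim, ∃ L : ℤ_[p], ∀ n,
        B.basis.repr (f (k * n)) i ≡ L
          [SMOD ((IsLocalRing.maximalIdeal ℤ_[p]) ^ n • ⊤ : Submodule ℤ_[p] ℤ_[p])] := by
      intro i
      refine IsPrecomplete.prec (inferInstance :
        IsPrecomplete (IsLocalRing.maximalIdeal ℤ_[p]) ℤ_[p])
        (f := fun n => B.basis.repr (f (k * n)) i) ?_
      intro m n hmn
      rw [SModEq.sub_mem, hzp m, Ideal.mem_span_singleton]
      have hd : f (k * m) - f (k * n) ∈ Ideal.span {e} ^ (k * m) := by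
        have := hf (Nat.mul_le_mul_left k hmn)
        rwa [SModEq.sub_mem, ideal_smul_top_eq] at this
      have := (hmem m _).mp (pk m _ hd) i
      rwa [map_sub, Finsupp.sub_apply] at this
    choose L hL using key
    refine ⟨∑ i, L i • B.basis i, fun n => ?_⟩
    rw [SModEq.sub_mem, ideal_smul_top_eq]
    have h1' : f n - f (k * n) ∈ Ideal.span {e} ^ n := by
      have hle : n ≤ k * n := Nat.le_mul_of_pos_left n (Nat.pos_of_ne_zero hk)
      have := hf hle
      rwa [SModEq.sub_mem, ideal_smul_top_eq] at this
    have h2' : f (k * n) - (∑ i, L i • B.basis i) ∈ Ideal.span {e} ^ n := by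
      refine pe n _ ((hmem n _).mpr fun i => ?_)
      have := hL i n
      rw [SModEq.sub_mem, hzp n, Ideal.mem_span_singleton] at this
      have hrepr : B.basis.repr (∑ j, L j • B.basis j) i = L i := by
        rw [B.basis.repr_sum_self]
      rwa [map_sub, Finsupp.sub_apply, hrepr]
    have heq : f n - (∑ i, L i • B.basis i) =
        (f n - f (k * n)) + (f (k * n) - (∑ i, L i • B.basis i)) := by ring
    rw [heq]
    exact add_mem h1' h2'

section Main

variable (p : ℕ) [hp : Fact p.Prime]
variable (K : Type) [Field K] [Algebra ℚ_[p] K] [Algebra ℤ_[p] K]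
  [IsScalarTower ℤ_[p] ℚ_[p] K]

lemma padic_algebraMap_injective : Function.Injective (algebraMap ℤ_[p] K) := by
  rw [IsScalarTower.algebraMap_eq ℤ_[p] ℚ_[p] K]
  exact (algebraMap ℚ_[p] K).injective.comp (IsFractionRing.injective ℤ_[p] ℚ_[p])

variable {ζ : K}

lemma padic_zeta_integral (hζ : IsPrimitiveRoot ζ p) : IsIntegral ℤ_[p] ζ :=
  ⟨X ^ p - C 1, monic_X_pow_sub_C 1 hp.out.pos.ne', by
    simp [hζ.pow_eq_one]⟩

lemma padic_minpoly_sub_one (hζ : IsPrimitiveRoot ζ p) :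
    minpoly ℤ_[p] (ζ - 1) = (cyclotomic p ℤ_[p]).comp (X + 1) := by
  haveI : NoZeroSMulDivisors ℤ_[p] K :=
    ⟨fun {c x} h => by
      rw [Algebra.smul_def, mul_eq_zero] at h
      exact h.imp_left fun h => (map_eq_zero_iff _ (padic_algebraMap_injective p K)).mp h⟩
  have hint : IsIntegral ℤ_[p] (ζ - 1) := (padic_zeta_integral p K hζ).sub isIntegral_one
  have hmonic : ((cyclotomic p ℤ_[p]).comp (X + 1)).Monic := by
    rw [show (X + 1 : ℤ_[p][X]) = X + C 1 by simp]
    refine (cyclotomic.monic p ℤ_[p]).comp (monic_X_add_C 1) fun h => ?_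
    rw [natDegree_X_add_C] at h
    exact zero_ne_one h.symm
  have haev : aeval (ζ - 1) ((cyclotomic p ℤ_[p]).comp (X + 1)) = 0 := by
    rw [aeval_comp]
    simp only [map_add, aeval_X, aeval_C, map_one, sub_add_cancel]
    rw [aeval_def, ← eval_map, map_cyclotomic]
    exact hζ.isRoot_cyclotomic hp.out.pos
  obtain ⟨q, hq⟩ := minpoly.isIntegrallyClosed_dvd hint haev
  have hirr := padic_cyclo_comp_irreducible p
  have hmono := minpoly.monic hint
  rcases hirr.isUnit_or_isUnit hq with h | h
  · exact absurd h (minpoly.not_isUnit _ _)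
  · exact (eq_of_monic_of_associated hmono hmonic ⟨h.unit, by rw [IsUnit.unit_spec, ← hq]⟩)

lemma padic_adjoin_zeta_sub_one_eq :
    Algebra.adjoin ℤ_[p] ({ζ - 1} : Set K) = Algebra.adjoin ℤ_[p] ({ζ} : Set K) := by
  apply le_antisymm
  · refine Algebra.adjoin_le (Set.singleton_subset_iff.mpr ?_)
    exact sub_mem (Algebra.self_mem_adjoin_singleton _ _) (one_mem _)
  · refine Algebra.adjoin_le (Set.singleton_subset_iff.mpr ?_)
    have h1 : (ζ - 1) + 1 ∈ Algebra.adjoin ℤ_[p] ({ζ - 1} : Set K) :=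
      add_mem (Algebra.self_mem_adjoin_singleton _ _) (one_mem _)
    simpa using h1

lemma padic_adjoin_zeta_eq_integralClosure
    [IsCyclotomicExtension {p} ℚ_[p] K] (hζ : IsPrimitiveRoot ζ p) :
    Algebra.adjoin ℤ_[p] ({ζ} : Set K) = integralClosure ℤ_[p] K := by
  haveI : NoZeroSMulDivisors ℤ_[p] K :=
    ⟨fun {c x} h => by
      rw [Algebra.smul_def, mul_eq_zero] at h
      exact h.imp_left fun h => (map_eq_zero_iff _ (padic_algebraMap_injective p K)).mp h⟩
  haveI : CharZero K := charZero_of_injective_algebraMap (algebraMap ℚ_[p] K).injective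
  haveI := IsCyclotomicExtension.finiteDimensional {p} ℚ_[p] K
  refine le_antisymm (adjoin_le_integralClosure (padic_zeta_integral p K hζ)) ?_
  intro x hx
  haveI : NeZero p := ⟨hp.out.ne_zero⟩
  have hζ' : IsPrimitiveRoot ζ p := hζ
  set B := hζ'.subOnePowerBasis ℚ_[p] with hB
  have hBgen : B.gen = ζ - 1 := hζ'.subOnePowerBasis_gen ℚ_[p]
  have hint : IsIntegral ℤ_[p] B.gen := by
    rw [hBgen]; exact (padic_zeta_integral p K hζ).sub isIntegral_one
  -- clear denominators
  have hone : (1 : ℝ) < (p : ℝ) := by exact_mod_cast hp.out.one_lt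
  have hsingle : ∀ i : Fin B.dim, ∃ m : ℕ, ∀ m' : ℕ, m ≤ m' →
      ‖(p : ℚ_[p]) ^ m' * B.basis.repr x i‖ ≤ 1 := by
    intro i
    obtain ⟨m, hm⟩ := pow_unbounded_of_one_lt (‖B.basis.repr x i‖) hone
    refine ⟨m, fun m' hm' => ?_⟩
    have hle : ‖B.basis.repr x i‖ ≤ (p : ℝ) ^ m' :=
      le_trans hm.le (pow_le_pow_right₀ hone.le hm')
    rw [norm_mul, norm_pow, Padic.norm_p]
    rw [inv_pow]
    rw [inv_mul_le_iff₀ (by positivity), mul_one]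
    exact hle
  choose ms hms using hsingle
  set m : ℕ := Finset.univ.sup ms with hmdef
  have hm : ∀ i, ‖(p : ℚ_[p]) ^ m * B.basis.repr x i‖ ≤ 1 := fun i =>
    hms i m (Finset.le_sup (Finset.mem_univ i))
  have hsm : (((p : ℕ) : ℤ_[p])) ^ m • x ∈ Algebra.adjoin ℤ_[p] ({B.gen} : Set K) := by
    have hx2 : (((p : ℕ) : ℤ_[p])) ^ m • x =
        ∑ i, ((p : ℚ_[p]) ^ m * B.basis.repr x i) • B.basis i := by
      have : (((p : ℕ) : ℤ_[p])) ^ m • x = ((p : ℚ_[p])) ^ m • x := by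
        rw [← IsScalarTower.algebraMap_smul ℚ_[p] ((((p : ℕ) : ℤ_[p])) ^ m) x]
        norm_num
      rw [this]
      conv_lhs => rw [← B.basis.sum_repr x]
      rw [Finset.smul_sum]
      refine Finset.sum_congr rfl fun i _ => ?_
      rw [smul_smul]
    rw [hx2]
    refine Subalgebra.sum_mem _ fun i _ => ?_
    set c : ℤ_[p] := ⟨(p : ℚ_[p]) ^ m * B.basis.repr x i, hm i⟩ with hc
    have hcs : ((p : ℚ_[p]) ^ m * B.basis.repr x i) • B.basis i = c • B.basis i := by
      rw [← IsScalarTower.algebraMap_smul ℚ_[p] c (B.basis i)]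
      rfl
    rw [hcs]
    refine Subalgebra.smul_mem _ ?_ _
    rw [B.coe_basis]
    exact Subalgebra.pow_mem _ (Algebra.self_mem_adjoin_singleton _ _) _
  have hei : (minpoly ℤ_[p] B.gen).IsEisensteinAt
      (Submodule.span ℤ_[p] {((p : ℕ) : ℤ_[p])}) := by
    rw [hBgen, padic_minpoly_sub_one p K hζ]
    exact padic_cyclo_comp_eisenstein p
  have hmem := mem_adjoin_of_smul_prime_pow_smul_of_minpoly_isEisensteinAt
    (B := B) PadicInt.prime_p hint hx hsm hei
  rw [hBgen] at hmem
  rw [← padic_adjoin_zeta_sub_one_eq p K]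
  exact hmem

end Main

set_option maxHeartbeats 1600000 in
set_option synthInstance.maxHeartbeats 1000000 in
theorem stmt_0 (p : ℕ) [hp : Fact p.Prime] (hodd : p ≠ 2)
    (K : Type) [Field K] [Algebra ℚ_[p] K] [Algebra ℤ_[p] K]
    [IsScalarTower ℤ_[p] ℚ_[p] K]
    [IsCyclotomicExtension {p} ℚ_[p] K]
    (ζ : K) (hζ : IsPrimitiveRoot ζ p) :
    ∃ lam : K, lam ∈ integralClosure ℤ_[p] K ∧
      Algebra.adjoin ℤ_[p] {lam} = integralClosure ℤ_[p] K ∧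
      lam ^ (p - 1) = -(p : K) ∧
      ∃ c : K, c ∈ integralClosure ℤ_[p] K ∧
        lam - (1 - ζ) = (1 - ζ) ^ 2 * c := by
  classical
  have hp2 : 2 ≤ p := hp.out.two_le
  have hp3 : 3 ≤ p := by omega
  haveI : NoZeroSMulDivisors ℤ_[p] K :=
    ⟨fun {c x} h => by
      rw [Algebra.smul_def, mul_eq_zero] at h
      exact h.imp_left fun h => (map_eq_zero_iff _ (padic_algebraMap_injective p K)).mp h⟩
  have hadj := padic_adjoin_zeta_eq_integralClosure p K hζ
  set O := Algebra.adjoin ℤ_[p] ({ζ} : Set K) with hO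
  set zO : O := ⟨ζ, Algebra.self_mem_adjoin_singleton _ _⟩ with hzO
  have hzK : ((zO : O) : K) = ζ := rfl
  set eO : O := 1 - zO with heO
  have heOK : ((eO : O) : K) = 1 - ζ := by
    show O.val eO = 1 - ζ
    rw [heO, map_sub, map_one]
    rfl
  set geomO : ℕ → O := fun m => ∑ i ∈ Finset.range m, zO ^ i with hgeomO
  have hgeomK : ∀ m, ((geomO m : O) : K) = ∑ i ∈ Finset.range m, ζ ^ i := by
    intro m
    show O.val (geomO m) = _
    rw [hgeomO]
    rw [map_sum]
    exact Finset.sum_congr rfl fun i _ => by rw [map_pow]; rfl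
  set uO : O := ∏ k ∈ Finset.range (p - 1), geomO (k + 1) with huO
  have huK : ((uO : O) : K) = ∏ k ∈ Finset.range (p - 1), ((geomO (k + 1) : O) : K) := by
    show O.val uO = _
    rw [huO, map_prod]
    rfl
  have hζ1 : ζ ≠ 1 := hζ.ne_one hp.out.one_lt
  have hne : (1 : K) - ζ ≠ 0 := sub_ne_zero.mpr (Ne.symm hζ1)
  have hfacK : ∀ m : ℕ, (1 : K) - ζ ^ m = (1 - ζ) * ((geomO m : O) : K) := by
    intro m
    rw [hgeomK]
    have h := geom_sum_mul ζ m
    linear_combination h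
  have hpsucc : p - 1 + 1 = p := Nat.succ_pred_eq_of_pos hp.out.pos
  have hζ'' : IsPrimitiveRoot ζ ((p - 1) + 1) := by rw [hpsucc]; exact hζ
  have hprod : ((p : ℕ) : K) = ∏ k ∈ Finset.range (p - 1), (1 - ζ ^ (k + 1)) := by
    have h := hζ''.prod_one_sub_pow_eq_order
    rw [h]
    have h2 : ((p - 1 : ℕ) : K) + 1 = (((p - 1) + 1 : ℕ) : K) := by push_cast; ring
    rw [h2, hpsucc]
  have hpuK : ((p : ℕ) : K) = ((1 - ζ) ^ (p - 1)) * ((uO : O) : K) := by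
    rw [hprod, huK]
    calc ∏ k ∈ Finset.range (p - 1), (1 - ζ ^ (k + 1))
        = ∏ k ∈ Finset.range (p - 1), ((1 - ζ) * ((geomO (k + 1) : O) : K)) :=
          Finset.prod_congr rfl fun k _ => hfacK (k + 1)
      _ = (1 - ζ) ^ (p - 1) * ∏ k ∈ Finset.range (p - 1), ((geomO (k + 1) : O) : K) := by
          rw [Finset.prod_mul_distrib, Finset.prod_const, Finset.card_range]
  have hpu : ((p : ℕ) : O) = eO ^ (p - 1) * uO := by
    apply Subtype.coe_injective
    push_cast [heOK]
    exact hpuK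
  -- uO is a unit
  have hunit_geom : ∀ k, k < p - 1 → IsUnit (geomO (k + 1)) := by
    intro k hk
    have hklt : k + 1 < p := by omega
    have hcop : Nat.Coprime (k + 1) p :=
      Nat.Coprime.symm ((Nat.Prime.coprime_iff_not_dvd hp.out).mpr
        (Nat.not_dvd_of_pos_of_lt (by omega) hklt))
    obtain ⟨j, -, hj⟩ := Nat.exists_mul_mod_eq_one_of_coprime hcop hp.out.one_lt
    set sO : O := ∑ i ∈ Finset.range j, zO ^ ((k + 1) * i) with hsO
    have hsK : ((sO : O) : K) = ∑ i ∈ Finset.range j, (ζ ^ (k + 1)) ^ i := by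
      show O.val sO = _
      rw [hsO, map_sum]
      refine Finset.sum_congr rfl fun i _ => ?_
      rw [map_pow]
      exact pow_mul ζ (k + 1) i
    refine IsUnit.of_mul_eq_one sO (Subtype.coe_injective ?_)
    push_cast
    have hgeo2 : (1 - ζ ^ (k + 1)) * (∑ i ∈ Finset.range j, (ζ ^ (k + 1)) ^ i)
        = 1 - (ζ ^ (k + 1)) ^ j := by
      have h := geom_sum_mul (ζ ^ (k + 1)) j
      linear_combination -h
    have hzj : (ζ ^ (k + 1)) ^ j = ζ := by
      rw [← pow_mul]
      calc ζ ^ ((k + 1) * j)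
          = ζ ^ (p * (((k + 1) * j) / p) + ((k + 1) * j) % p) := by rw [Nat.div_add_mod]
        _ = (ζ ^ p) ^ (((k + 1) * j) / p) * ζ ^ (((k + 1) * j) % p) := by
            rw [pow_add, pow_mul]
        _ = ζ := by rw [hζ.pow_eq_one, one_pow, one_mul, hj, pow_one]
    apply mul_left_cancel₀ hne
    rw [mul_one, ← mul_assoc, ← hfacK (k + 1), hsK, hgeo2, hzj]
  have huUnit : IsUnit uO := by
    rw [huO]
    exact Finset.prod_induction _ IsUnit (fun a b ha hb => ha.mul hb) isUnit_one
      fun k hk => hunit_geom k (Finset.mem_range.mp hk)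
  -- ideal and completeness
  set I : Ideal O := Ideal.span {eO} with hI
  have hpmem : ((p : ℕ) : O) ∈ I := by
    rw [hI, Ideal.mem_span_singleton]
    refine ⟨eO ^ (p - 2) * uO, ?_⟩
    rw [hpu, show p - 1 = (p - 2) + 1 by omega, pow_succ]
    ring
  have heImem : eO ^ (p - 1) ∈ Ideal.span {((p : ℕ) : O)} := by
    obtain ⟨U, hU⟩ := huUnit
    rw [Ideal.mem_span_singleton]
    refine ⟨(↑U⁻¹ : O), ?_⟩
    have h1 : uO * (↑U⁻¹ : O) = 1 := by rw [← hU]; exact U.mul_inv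
    calc eO ^ (p - 1) = eO ^ (p - 1) * (uO * ↑U⁻¹) := by rw [h1, mul_one]
      _ = ((p : ℕ) : O) * ↑U⁻¹ := by rw [← mul_assoc, ← hpu]
  set B' : PowerBasis ℤ_[p] O := Algebra.adjoin.powerBasis' (padic_zeta_integral p K hζ)
    with hB'
  haveI hAC : IsAdicComplete I O := by
    rw [hI]
    exact padic_span_adic_complete p B' eO (p - 1) (by omega) heImem hpmem
  -- Wilson's lemma
  obtain ⟨t, ht⟩ : ∃ t : ℤ, (((p - 1).factorial : ℤ) + 1 : ℤ) = (p : ℤ) * t := by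
    have h := ZMod.wilsons_lemma p
    have h0 : (((((p - 1).factorial : ℤ) + 1 : ℤ)) : ZMod p) = 0 := by
      push_cast
      rw [h]
      ring
    exact (ZMod.intCast_zmod_eq_zero_iff_dvd _ p).mp h0
  set π := Ideal.Quotient.mk I with hπ
  have hπz : π zO = 1 := by
    rw [← map_one π]
    rw [Ideal.Quotient.mk_eq_mk_iff_sub_mem]
    rw [hI, Ideal.mem_span_singleton]
    exact ⟨-1, by rw [heO]; ring⟩
  have hπgeom : ∀ m : ℕ, π (geomO m) = (m : O ⧸ I) := by
    intro m
    rw [hgeomO]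
    rw [map_sum]
    simp [map_pow, hπz]
  have hπu : π uO = (((p - 1).factorial : ℕ) : O ⧸ I) := by
    rw [huO, map_prod]
    simp only [hπgeom]
    rw [← Nat.cast_prod]
    rw [Finset.prod_range_add_one_eq_factorial]
  have hπp : ((p : ℕ) : O ⧸ I) = 0 := by
    rw [← map_natCast π]
    exact Ideal.Quotient.eq_zero_iff_mem.mpr hpmem
  have heval : eval 1 ((X : O[X]) ^ (p - 1) - C (-uO)) ∈ I := by
    have he : eval 1 ((X : O[X]) ^ (p - 1) - C (-uO)) = 1 + uO := by
      simp [sub_neg_eq_add]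
    rw [he, ← Ideal.Quotient.eq_zero_iff_mem, map_add, map_one, ← hπ, hπu]
    have h2 : ((((((p - 1).factorial : ℤ) + 1 : ℤ)) : O ⧸ I)) = 0 := by
      rw [ht]
      push_cast
      rw [hπp]
      ring
    calc (1 : O ⧸ I) + (((p - 1).factorial : ℕ) : O ⧸ I)
        = ((((((p - 1).factorial : ℤ) + 1 : ℤ)) : O ⧸ I)) := by push_cast; ring
      _ = 0 := h2
  have hderiv : IsUnit (π (eval 1 (derivative ((X : O[X]) ^ (p - 1) - C (-uO))))) := by
    have hd1 : eval 1 (derivative ((X : O[X]) ^ (p - 1) - C (-uO))) = ((p - 1 : ℕ) : O) := by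
      simp [derivative_X_pow]
    rw [hd1, map_natCast π]
    have h3 : (((p - 1 : ℕ)) : O ⧸ I) = -1 := by
      rw [Nat.cast_sub hp.out.one_le, hπp]
      simp
    rw [h3]
    exact (isUnit_one : IsUnit (1 : O ⧸ I)).neg
  obtain ⟨a, haroot, ha1⟩ := HenselianRing.is_henselian (I := I)
    ((X : O[X]) ^ (p - 1) - C (-uO)) (monic_X_pow_sub_C _ (by omega)) 1 heval hderiv
  have hapow : a ^ (p - 1) = -uO := by
    have h := haroot
    rw [IsRoot, eval_sub, eval_pow, eval_X, eval_C, sub_eq_zero] at h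
    exact h
  set lamO : O := eO * a with hlamO
  have hlampow : lamO ^ (p - 1) = -((p : ℕ) : O) := by
    rw [hlamO, mul_pow, hapow, hpu]
    ring
  have haunit : IsUnit a := by
    have hjac := IsAdicComplete.le_jacobson_bot I
    have h4 := Ideal.mem_jacobson_bot.mp (hjac ha1) 1
    simpa using h4
  obtain ⟨av, hav⟩ := haunit
  have hainv : a * (↑av⁻¹ : O) = 1 := by rw [← hav]; exact av.mul_inv
  have hgenz : B'.gen = zO := by
    rw [hB', Algebra.adjoin.powerBasis'_gen]
  -- step: every element is (scalar) + lamO * (element)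
  have hstep : ∀ x : O, ∃ r : ℤ_[p], ∃ m : O, x = algebraMap ℤ_[p] O r + lamO * m := by
    intro x
    refine ⟨∑ i, B'.basis.repr x i, ?_⟩
    have hx1 : x - algebraMap ℤ_[p] O (∑ i, B'.basis.repr x i) ∈ I := by
      have halg : algebraMap ℤ_[p] O (∑ i, B'.basis.repr x i)
          = ∑ i, B'.basis.repr x i • (1 : O) := by
        rw [map_sum]
        exact Finset.sum_congr rfl fun i _ => by
          rw [Algebra.algebraMap_eq_smul_one]
      have hxr : x = ∑ i, B'.basis.repr x i • B'.basis i := (B'.basis.sum_repr x).symm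
      have hkey : ∑ i, B'.basis.repr x i • (B'.basis i - 1)
          = x - algebraMap ℤ_[p] O (∑ i, B'.basis.repr x i) := by
        rw [halg]
        simp only [smul_sub]
        rw [Finset.sum_sub_distrib, ← hxr]
      rw [← hkey]
      refine Submodule.sum_mem _ fun i _ => ?_
      rw [Algebra.smul_def]
      refine Ideal.mul_mem_left _ _ ?_
      rw [B'.coe_basis, hgenz, hI, Ideal.mem_span_singleton]
      have h5 := sub_dvd_pow_sub_pow zO 1 (i : ℕ)
      rw [one_pow] at h5
      have h6 : zO - 1 = -eO := by rw [heO]; ring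
      rw [h6] at h5
      exact (neg_dvd).mp h5
    obtain ⟨d, hd⟩ := Ideal.mem_span_singleton.mp (by rwa [hI] at hx1)
    refine ⟨(↑av⁻¹ : O) * d, ?_⟩
    have h7 : lamO * ((↑av⁻¹ : O) * d) = eO * d := by
      rw [hlamO]
      linear_combination (eO * d) * hainv
    rw [h7, ← hd]
    ring
  -- build up adjoin
  have hind : ∀ k : ℕ, ∀ x : O, ∃ y ∈ Algebra.adjoin ℤ_[p] ({lamO} : Set O),
      ∃ m : O, x = y + lamO ^ k * m := by
    intro k
    induction k with
    | zero => exact fun x => ⟨0, zero_mem _, x, by simp⟩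
    | succ k ih =>
      intro x
      obtain ⟨y, hy, m, hm⟩ := ih x
      obtain ⟨r, m', hm'⟩ := hstep m
      refine ⟨y + lamO ^ k * algebraMap ℤ_[p] O r, ?_, m', ?_⟩
      · exact add_mem hy (mul_mem (pow_mem (Algebra.self_mem_adjoin_singleton _ _) _)
          (Subalgebra.algebraMap_mem _ _))
      · rw [hm, hm']
        ring
  -- Nakayama
  haveI : Module.Finite ℤ_[p] O := Module.Finite.of_basis B'.basis
  have htop : Algebra.adjoin ℤ_[p] ({lamO} : Set O) = ⊤ := by
    rw [← Algebra.toSubmodule_eq_top, ← top_le_iff]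
    have hFG : (⊤ : Submodule ℤ_[p] O).FG := Module.finite_def.mp inferInstance
    have hjac : Ideal.span {((p : ℕ) : ℤ_[p])} ≤ (⊥ : Ideal ℤ_[p]).jacobson := by
      rw [IsLocalRing.jacobson_eq_maximalIdeal (⊥ : Ideal ℤ_[p]) bot_ne_top,
        PadicInt.maximalIdeal_eq_span_p]
    refine Submodule.le_of_le_smul_of_le_jacobson_bot hFG hjac ?_
    intro x _
    obtain ⟨y, hy, m, hm⟩ := hind (p - 1) x
    refine Submodule.mem_sup.mpr ⟨y, hy, lamO ^ (p - 1) * m, ?_, hm.symm⟩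
    rw [hlampow]
    have h8 : -((p : ℕ) : O) * m = (-((p : ℕ) : ℤ_[p])) • m := by
      rw [Algebra.smul_def, map_neg, map_natCast]
    rw [h8]
    exact Submodule.smul_mem_smul (neg_mem (Ideal.subset_span rfl)) trivial
  have hmapO : Algebra.adjoin ℤ_[p] ({(lamO : K)} : Set K) = O := by
    have h9 : Algebra.adjoin ℤ_[p] ({(lamO : K)} : Set K)
        = Subalgebra.map O.val (Algebra.adjoin ℤ_[p] ({lamO} : Set O)) := by
      rw [AlgHom.map_adjoin, Set.image_singleton]
      rfl
    rw [h9, htop, Algebra.map_top, Subalgebra.range_val]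
  refine ⟨(lamO : K), ?_, ?_, ?_, ?_⟩
  · rw [← hadj]; exact lamO.2
  · exact hmapO.trans hadj
  · have h10 := congrArg (fun x : O => (x : K)) hlampow
    push_cast at h10
    exact h10
  · obtain ⟨d, hd⟩ := Ideal.mem_span_singleton.mp (by rwa [hI] at ha1)
    refine ⟨(d : K), by rw [← hadj]; exact d.2, ?_⟩
    have hOeq : lamO - eO = eO ^ 2 * d := by
      rw [hlamO]
      linear_combination eO * hd
    have h11 := congrArg (fun x : O => (x : K)) hOeq
    push_cast at h11
    rw [heOK] at h11
    exact h11
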